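/- arXiv:2505.12167 — 3 statements merged into one kernel-verified Lean document; each statement's English description precedes it below -/
import Mathlib

section
/- For a signal X of even length T perturbed only in its approximation Haar coefficients by δ_A, the change in the (unnormalized) even-lag autocorrelation satisfies ρ_A(2m) − ρ(2m) = Σ_{k=m+1}^{T/2} [ C^L_k δ_A(k−m) + C^L_{k−m} δ_A(k) + δ_A(k) δ_A(k−m) ], where ρ(l) = Σ_{t=1}^{T−l} X_{t+l} X_t. -/
private lemma sum_pair (f : ℕ → ℝ) (N : ℕ) :
    ∑ t ∈ Finset.Icc 1 (2*N), f t = ∑ j ∈ Finset.Icc 1 N, (f (2*j-1) + f (2*j)) := by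
  induction N with
  | zero => simp
  | succ n ih =>
    have h1 : 2*(n+1) = (2*n+1)+1 := by ring
    rw [h1, Finset.sum_Icc_succ_top (by omega), Finset.sum_Icc_succ_top (by omega), ih,
      Finset.sum_Icc_succ_top (by omega : 1 ≤ n+1)]
    have h2 : 2*(n+1) - 1 = 2*n+1 := by omega
    rw [show (2*n+1)+1 = 2*(n+1) by ring, h2]
    ring

private lemma pair_id (a clk chk dk clj chj dj : ℝ) (h2 : a * a = 2) :
    ((clk + dk)/a + chk/a) * ((clj + dj)/a + chj/a)
      + ((clk + dk)/a - chk/a) * ((clj + dj)/a - chj/a)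
      - ((clk + chk)/a * ((clj + chj)/a) + (clk - chk)/a * ((clj - chj)/a))
    = clk * dj + clj * dk + dk * dj := by
  have ha : a ≠ 0 := by intro h; rw [h] at h2; norm_num at h2
  field_simp
  linear_combination -(clk * dj + clj * dk + dk * dj) * h2

private lemma solveX1 (a x1 x2 cl ch : ℝ) (ha : a*a = 2)
    (hcl : cl = (x1+x2)/a) (hch : ch = (x1-x2)/a) : x1 = (cl+ch)/a := by
  rw [hcl, hch, ← add_div, div_div, ha]; ring

private lemma solveX2 (a x1 x2 cl ch : ℝ) (ha : a*a = 2)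
    (hcl : cl = (x1+x2)/a) (hch : ch = (x1-x2)/a) : x2 = (cl-ch)/a := by
  rw [hcl, hch, div_sub_div_same, div_div, ha]; ring

/-- Change in even-lag autocorrelation under approximation-coefficient
perturbations. -/
theorem autocorrelation_change_approx
    (T : ℕ) (hT : 0 < T) (hTeven : Even T)
    (X XA CL CH δA : ℕ → ℝ)
    (hCL : ∀ k ∈ Finset.Icc 1 (T / 2),
      CL k = (X (2 * k - 1) + X (2 * k)) / Real.sqrt 2)
    (hCH : ∀ k ∈ Finset.Icc 1 (T / 2),
      CH k = (X (2 * k - 1) - X (2 * k)) / Real.sqrt 2)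
    (hXA1 : ∀ k ∈ Finset.Icc 1 (T / 2),
      XA (2 * k - 1) = (CL k + δA k) / Real.sqrt 2 + CH k / Real.sqrt 2)
    (hXA0 : ∀ k ∈ Finset.Icc 1 (T / 2),
      XA (2 * k) = (CL k + δA k) / Real.sqrt 2 - CH k / Real.sqrt 2)
    (ρ ρA : ℕ → ℝ)
    (hρ : ∀ l, ρ l = ∑ t ∈ Finset.Icc 1 (T - l), X (t + l) * X t)
    (hρA : ∀ l, ρA l = ∑ t ∈ Finset.Icc 1 (T - l), XA (t + l) * XA t)
    (m : ℕ) (hm : m + 1 ≤ T / 2) :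
    ρA (2 * m) - ρ (2 * m) =
      ∑ k ∈ Finset.Icc (m + 1) (T / 2),
        (CL k * δA (k - m) + CL (k - m) * δA k + δA k * δA (k - m)) := by
  obtain ⟨r, hr⟩ := hTeven
  have h2 : Real.sqrt 2 * Real.sqrt 2 = 2 := Real.mul_self_sqrt (by norm_num)
  set N := T / 2 - m with hN
  have hTm : T - 2*m = 2*N := by omega
  have hNm : N + m = T / 2 := by omega
  rw [hρ, hρA, ← Finset.sum_sub_distrib, hTm, sum_pair]
  -- reindex RHS
  have hmap : Finset.Icc (m+1) (T/2)
      = Finset.map (addRightEmbedding m) (Finset.Icc 1 N) := by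
    rw [Finset.map_add_right_Icc]
    congr 1 <;> omega
  rw [hmap, Finset.sum_map]
  apply Finset.sum_congr rfl
  intro j hj
  simp only [Finset.mem_Icc] at hj
  simp only [addRightEmbedding_apply, Nat.add_sub_cancel]
  set k := j + m with hk
  have hjm : j ∈ Finset.Icc 1 (T/2) := by simp [Finset.mem_Icc]; omega
  have hkm : k ∈ Finset.Icc 1 (T/2) := by simp [Finset.mem_Icc]; omega
  have e1 : 2*j - 1 + 2*m = 2*k - 1 := by omega
  have e2 : 2*j + 2*m = 2*k := by omega
  rw [e1, e2, hXA1 k hkm, hXA1 j hjm, hXA0 k hkm, hXA0 j hjm,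
    solveX1 _ (X (2*k-1)) (X (2*k)) _ _ h2 (hCL k hkm) (hCH k hkm),
    solveX1 _ (X (2*j-1)) (X (2*j)) _ _ h2 (hCL j hjm) (hCH j hjm),
    solveX2 _ (X (2*k-1)) (X (2*k)) _ _ h2 (hCL k hkm) (hCH k hkm),
    solveX2 _ (X (2*j-1)) (X (2*j)) _ _ h2 (hCL j hjm) (hCH j hjm)]
  linear_combination pair_id (Real.sqrt 2) (CL k) (CH k) (δA k) (CL j) (CH j) (δA j) h2
end

section
/- For a signal X of even length T perturbed only in its detail Haar coefficients by δ_D, the change in the (unnormalized) even-lag autocorrelation satisfies ρ_D(2m) − ρ(2m) = Σ_{k=m+1}^{T/2} [ C^H_k δ_D(k−m) + C^H_{k−m} δ_D(k) + δ_D(k) δ_D(k−m) ], where ρ(l) = Σ_{t=1}^{T−l} X_{t+l} X_t. -/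
lemma pair_sum (f : ℕ → ℝ) : ∀ N : ℕ, ∑ t ∈ Finset.Icc 1 (2*N), f t
    = ∑ j ∈ Finset.Icc 1 N, (f (2*j-1) + f (2*j))
  | 0 => by simp
  | N+1 => by
    have h1 : 2*(N+1) = (2*N+1)+1 := by ring
    rw [h1, Finset.sum_Icc_succ_top (by omega), Finset.sum_Icc_succ_top (by omega),
      Finset.sum_Icc_succ_top (by omega : 1 ≤ N+1), pair_sum f N]
    have e1 : 2*(N+1)-1 = 2*N+1 := by omega
    have e2 : 2*(N+1) = 2*N+1+1 := by omega
    rw [e1, e2]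
    ring

/-- Change in even-lag autocorrelation under detail-coefficient perturbations. -/
theorem autocorrelation_change_detail
    (T : ℕ) (hT : 0 < T) (hTeven : Even T)
    (X XD CL CH δD : ℕ → ℝ)
    (hCL : ∀ k ∈ Finset.Icc 1 (T / 2),
      CL k = (X (2 * k - 1) + X (2 * k)) / Real.sqrt 2)
    (hCH : ∀ k ∈ Finset.Icc 1 (T / 2),
      CH k = (X (2 * k - 1) - X (2 * k)) / Real.sqrt 2)
    (hXD1 : ∀ k ∈ Finset.Icc 1 (T / 2),
      XD (2 * k - 1) = CL k / Real.sqrt 2 + (CH k + δD k) / Real.sqrt 2)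
    (hXD0 : ∀ k ∈ Finset.Icc 1 (T / 2),
      XD (2 * k) = CL k / Real.sqrt 2 - (CH k + δD k) / Real.sqrt 2)
    (ρ ρD : ℕ → ℝ)
    (hρ : ∀ l, ρ l = ∑ t ∈ Finset.Icc 1 (T - l), X (t + l) * X t)
    (hρD : ∀ l, ρD l = ∑ t ∈ Finset.Icc 1 (T - l), XD (t + l) * XD t)
    (m : ℕ) (hm : m + 1 ≤ T / 2) :
    ρD (2 * m) - ρ (2 * m) =
      ∑ k ∈ Finset.Icc (m + 1) (T / 2),
        (CH k * δD (k - m) + CH (k - m) * δD k + δD k * δD (k - m)) := by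
  obtain ⟨r, hr⟩ := hTeven
  have hT2 : T / 2 = r := by omega
  set N := T / 2 - m with hN
  have hTm : T - 2*m = 2*N := by omega
  rw [hρ, hρD, hTm, ← Finset.sum_sub_distrib,
    pair_sum (fun t => XD (t + 2*m) * XD t - X (t + 2*m) * X t)]
  have hmap : Finset.Icc (m+1) (T/2) = (Finset.Icc 1 N).map (addRightEmbedding m) := by
    rw [Finset.map_add_right_Icc]
    congr 1 <;> omega
  rw [hmap, Finset.sum_map]
  apply Finset.sum_congr rfl
  intro j hj
  simp only [Finset.mem_Icc] at hj
  have hjT : j ∈ Finset.Icc 1 (T/2) := by simp only [Finset.mem_Icc]; omega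
  have hjmT : j + m ∈ Finset.Icc 1 (T/2) := by simp only [Finset.mem_Icc]; omega
  have e1 : 2*j-1+2*m = 2*(j+m)-1 := by omega
  have e2 : 2*j+2*m = 2*(j+m) := by omega
  simp only [addRightEmbedding_apply, Nat.add_sub_cancel, e1, e2,
    hXD1 j hjT, hXD0 j hjT, hXD1 (j+m) hjmT, hXD0 (j+m) hjmT,
    hCL j hjT, hCH j hjT, hCL (j+m) hjmT, hCH (j+m) hjmT]
  have hs : Real.sqrt 2 * Real.sqrt 2 = 2 := Real.mul_self_sqrt (by norm_num)
  have hne : Real.sqrt 2 ≠ 0 := by positivity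
  have h2 : Real.sqrt 2 ^ 2 = 2 := by rw [sq, hs]
  have h3 : Real.sqrt 2 ^ 3 = 2 * Real.sqrt 2 := by rw [pow_succ, h2]
  field_simp
  ring_nf
  rw [h2, h3]
  have h4 : Real.sqrt 2 ^ 4 = 4 := by rw [show (4:ℕ) = 2 * 2 from rfl, pow_mul, h2]; norm_num
  rw [h4]
  ring
end

section
/- Suppose a signal X of even length T is perturbed only in its approximation Haar coefficients by δ_A, with |δ_A(k)| ≤ ε for all k. Then the total absolute change in the even-lag autocorrelations is bounded by Σ_{m=0}^{T/2−1} |ρ_A(2m) − ρ(2m)| ≤ ε·(T/2 + 1)·Σ_{k=1}^{T/2} |C^L_k| + ε²·(T² + 2T)/8. -/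
private lemma alg_aux (s a a' b b' d d' : ℝ) (hs : s * s = 2) :
    ((a + d' / s) * (b + d / s) - a * b) + ((a' + d' / s) * (b' + d / s) - a' * b')
      = d' * ((b + b') / s) + d * ((a + a') / s) + d * d' := by
  have hs0 : s ≠ 0 := by intro h; rw [h] at hs; norm_num at hs
  field_simp
  linear_combination (-(d * d')) * hs

private lemma pair_sum_aux (f : ℕ → ℝ) (M : ℕ) :
    ∑ t ∈ Finset.Icc 1 (2 * M), f t
      = ∑ j ∈ Finset.Icc 1 M, (f (2 * j - 1) + f (2 * j)) := by
  induction M with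
  | zero => simp
  | succ M ih =>
    have h1 : 2 * (M + 1) = (2 * M + 1) + 1 := by ring
    rw [h1, Finset.sum_Icc_succ_top (by omega) f,
        Finset.sum_Icc_succ_top (by omega) f, ih,
        Finset.sum_Icc_succ_top (by omega)]
    have e1 : 2 * (M + 1) - 1 = 2 * M + 1 := by omega
    have e2 : 2 * (M + 1) = 2 * M + 1 + 1 := by omega
    rw [e1, e2]; ring

private lemma gauss_aux : ∀ n : ℕ, ∑ i ∈ Finset.range n, ((i : ℝ) + 1) = n * (n + 1) / 2 := by
  intro n
  induction n with
  | zero => simp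
  | succ n ih => rw [Finset.sum_range_succ, ih]; push_cast; ring

private lemma gauss_sub (n : ℕ) :
    ∑ m ∈ Finset.range n, ((n - m : ℕ) : ℝ) = n * (n + 1) / 2 := by
  rw [← Finset.sum_range_reflect (fun m => ((n - m : ℕ) : ℝ)) n, ← gauss_aux n]
  refine Finset.sum_congr rfl fun j hj => ?_
  rw [Finset.mem_range] at hj
  have : n - (n - 1 - j) = j + 1 := by omega
  rw [this]; push_cast; ring

/-- Bound on the total absolute change of even-lag autocorrelations under
bounded approximation-coefficient perturbations. -/
theorem autocorrelation_bound_approx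
    (T : ℕ) (hT : 0 < T) (hTeven : Even T)
    (X XA CL CH δA : ℕ → ℝ) (ε : ℝ) (hε : 0 ≤ ε)
    (hδ : ∀ k ∈ Finset.Icc 1 (T / 2), |δA k| ≤ ε)
    (hCL : ∀ k ∈ Finset.Icc 1 (T / 2),
      CL k = (X (2 * k - 1) + X (2 * k)) / Real.sqrt 2)
    (hCH : ∀ k ∈ Finset.Icc 1 (T / 2),
      CH k = (X (2 * k - 1) - X (2 * k)) / Real.sqrt 2)
    (hXA1 : ∀ k ∈ Finset.Icc 1 (T / 2),
      XA (2 * k - 1) = (CL k + δA k) / Real.sqrt 2 + CH k / Real.sqrt 2)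
    (hXA0 : ∀ k ∈ Finset.Icc 1 (T / 2),
      XA (2 * k) = (CL k + δA k) / Real.sqrt 2 - CH k / Real.sqrt 2)
    (ρ ρA : ℕ → ℝ)
    (hρ : ∀ l, ρ l = ∑ t ∈ Finset.Icc 1 (T - l), X (t + l) * X t)
    (hρA : ∀ l, ρA l = ∑ t ∈ Finset.Icc 1 (T - l), XA (t + l) * XA t) :
    ∑ m ∈ Finset.range (T / 2), |ρA (2 * m) - ρ (2 * m)| ≤
      ε * ((T : ℝ) / 2 + 1) * ∑ k ∈ Finset.Icc 1 (T / 2), |CL k| +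
      ε ^ 2 * ((T : ℝ) ^ 2 + 2 * (T : ℝ)) / 8 := by
  obtain ⟨r, hr⟩ := hTeven
  set N := T / 2 with hN
  have hTN : T = 2 * N := by omega
  have hs2 : Real.sqrt 2 * Real.sqrt 2 = 2 := Real.mul_self_sqrt (by norm_num)
  have hs0 : Real.sqrt 2 ≠ 0 := by positivity
  -- XA in terms of X
  have hXA1' : ∀ k ∈ Finset.Icc 1 N, XA (2 * k - 1) = X (2 * k - 1) + δA k / Real.sqrt 2 := by
    intro k hk
    rw [hXA1 k hk, hCL k hk, hCH k hk, add_div, div_div, div_div, hs2]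
    ring
  have hXA0' : ∀ k ∈ Finset.Icc 1 N, XA (2 * k) = X (2 * k) + δA k / Real.sqrt 2 := by
    intro k hk
    rw [hXA0 k hk, hCL k hk, hCH k hk, add_div, div_div, div_div, hs2]
    ring
  -- key identity
  have key : ∀ m ∈ Finset.range N,
      ρA (2 * m) - ρ (2 * m) =
        ∑ j ∈ Finset.Icc 1 (N - m),
          (δA (j + m) * CL j + δA j * CL (j + m) + δA j * δA (j + m)) := by
    intro m hm
    rw [Finset.mem_range] at hm
    have hTm : T - 2 * m = 2 * (N - m) := by omega
    rw [hρ, hρA, ← Finset.sum_sub_distrib, hTm,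
      pair_sum_aux (fun t => XA (t + 2 * m) * XA t - X (t + 2 * m) * X t) (N - m)]
    refine Finset.sum_congr rfl fun j hj => ?_
    rw [Finset.mem_Icc] at hj
    have hj1 : j ∈ Finset.Icc 1 N := by rw [Finset.mem_Icc]; omega
    have hjm : j + m ∈ Finset.Icc 1 N := by rw [Finset.mem_Icc]; omega
    have e1 : 2 * j - 1 + 2 * m = 2 * (j + m) - 1 := by omega
    have e2 : 2 * j + 2 * m = 2 * (j + m) := by omega
    simp only [e1, e2]
    rw [hXA1' _ hjm, hXA1' _ hj1, hXA0' _ hjm, hXA0' _ hj1,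
      hCL j hj1, hCL (j + m) hjm]
    exact alg_aux (Real.sqrt 2) _ _ _ _ _ _ hs2
  -- per-m bound
  have bound : ∀ m ∈ Finset.range N,
      |ρA (2 * m) - ρ (2 * m)| ≤
        ∑ j ∈ Finset.Icc 1 (N - m), (ε * |CL j| + ε * |CL (j + m)| + ε ^ 2) := by
    intro m hm
    rw [key m hm]
    refine (Finset.abs_sum_le_sum_abs _ _).trans (Finset.sum_le_sum fun j hj => ?_)
    rw [Finset.mem_Icc] at hj
    rw [Finset.mem_range] at hm
    have h1 := hδ j (by rw [Finset.mem_Icc]; omega)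
    have h2 := hδ (j + m) (by rw [Finset.mem_Icc]; omega)
    refine (abs_add_three _ _ _).trans ?_
    rw [abs_mul, abs_mul, abs_mul]
    have a1 := abs_nonneg (CL j)
    have a2 := abs_nonneg (CL (j + m))
    have a3 := abs_nonneg (δA j)
    have a4 := abs_nonneg (δA (j + m))
    nlinarith [mul_le_mul_of_nonneg_right h2 a1, mul_le_mul_of_nonneg_right h1 a2,
      mul_le_mul h1 h2 a4 hε]
  -- total of the bound
  set S := ∑ k ∈ Finset.Icc 1 N, |CL k| with hS
  have hA : ∑ m ∈ Finset.range N, ∑ j ∈ Finset.Icc 1 (N - m), |CL j|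
      = ∑ j ∈ Finset.Icc 1 N, ((N + 1 - j : ℕ) : ℝ) * |CL j| := by
    have e : ∀ m ∈ Finset.range N, ∑ j ∈ Finset.Icc 1 (N - m), |CL j|
        = ∑ j ∈ Finset.Icc 1 N, if j ≤ N - m then |CL j| else 0 := by
      intro m _
      rw [← Finset.sum_filter]
      congr 1
      ext x
      simp only [Finset.mem_Icc, Finset.mem_filter]
      omega
    rw [Finset.sum_congr rfl e, Finset.sum_comm]
    refine Finset.sum_congr rfl fun j hj => ?_
    rw [Finset.mem_Icc] at hj
    rw [← Finset.sum_filter]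
    have hf : (Finset.range N).filter (fun m => j ≤ N - m) = Finset.range (N + 1 - j) := by
      ext m
      simp only [Finset.mem_filter, Finset.mem_range]
      omega
    rw [hf, Finset.sum_const, Finset.card_range, nsmul_eq_mul]
  have hB : ∑ m ∈ Finset.range N, ∑ j ∈ Finset.Icc 1 (N - m), |CL (j + m)|
      = ∑ k ∈ Finset.Icc 1 N, (k : ℝ) * |CL k| := by
    have e : ∀ m ∈ Finset.range N, ∑ j ∈ Finset.Icc 1 (N - m), |CL (j + m)|
        = ∑ k ∈ Finset.Icc 1 N, if m + 1 ≤ k then |CL k| else 0 := by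
      intro m hm
      rw [Finset.mem_range] at hm
      have h1 : ∑ j ∈ Finset.Icc 1 (N - m), |CL (j + m)|
          = ∑ k ∈ Finset.Icc (1 + m) (N - m + m), |CL k| := by
        rw [← Finset.map_add_right_Icc, Finset.sum_map]
        simp [addRightEmbedding]
      rw [h1, ← Finset.sum_filter]
      congr 1
      ext x
      simp only [Finset.mem_Icc, Finset.mem_filter]
      omega
    rw [Finset.sum_congr rfl e, Finset.sum_comm]
    refine Finset.sum_congr rfl fun k hk => ?_
    rw [Finset.mem_Icc] at hk
    rw [← Finset.sum_filter]
    have hf : (Finset.range N).filter (fun m => m + 1 ≤ k) = Finset.range k := by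
      ext m
      simp only [Finset.mem_filter, Finset.mem_range]
      omega
    rw [hf, Finset.sum_const, Finset.card_range, nsmul_eq_mul]
  have hC : ∑ m ∈ Finset.range N, ∑ j ∈ Finset.Icc 1 (N - m), (ε ^ 2 : ℝ)
      = (N : ℝ) * (N + 1) / 2 * ε ^ 2 := by
    have e : ∀ m ∈ Finset.range N, ∑ j ∈ Finset.Icc 1 (N - m), (ε ^ 2 : ℝ)
        = ((N - m : ℕ) : ℝ) * ε ^ 2 := by
      intro m _
      rw [Finset.sum_const, Nat.card_Icc, nsmul_eq_mul]
      norm_num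
    rw [Finset.sum_congr rfl e, ← Finset.sum_mul, gauss_sub]
  have total : ∑ m ∈ Finset.range N,
      ∑ j ∈ Finset.Icc 1 (N - m), (ε * |CL j| + ε * |CL (j + m)| + ε ^ 2)
      = ε * ((N : ℝ) + 1) * S + ε ^ 2 * ((N : ℝ) * (N + 1) / 2) := by
    have split : ∀ m ∈ Finset.range N,
        ∑ j ∈ Finset.Icc 1 (N - m), (ε * |CL j| + ε * |CL (j + m)| + ε ^ 2)
        = ε * ∑ j ∈ Finset.Icc 1 (N - m), |CL j|
          + ε * ∑ j ∈ Finset.Icc 1 (N - m), |CL (j + m)|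
          + ∑ j ∈ Finset.Icc 1 (N - m), (ε ^ 2 : ℝ) := by
      intro m _
      rw [Finset.sum_add_distrib, Finset.sum_add_distrib, Finset.mul_sum, Finset.mul_sum]
    rw [Finset.sum_congr rfl split, Finset.sum_add_distrib, Finset.sum_add_distrib,
      ← Finset.mul_sum, ← Finset.mul_sum, hA, hB, hC]
    have comb : ∑ j ∈ Finset.Icc 1 N, ((N + 1 - j : ℕ) : ℝ) * |CL j|
        + ∑ j ∈ Finset.Icc 1 N, (j : ℝ) * |CL j| = ((N : ℝ) + 1) * S := by
      rw [← Finset.sum_add_distrib, hS, Finset.mul_sum]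
      refine Finset.sum_congr rfl fun j hj => ?_
      rw [Finset.mem_Icc] at hj
      have : ((N + 1 - j : ℕ) : ℝ) = (N : ℝ) + 1 - (j : ℝ) := by
        push_cast [Nat.cast_sub (by omega : j ≤ N + 1)]; ring
      rw [this]; ring
    linear_combination ε * comb
  calc ∑ m ∈ Finset.range N, |ρA (2 * m) - ρ (2 * m)|
      ≤ ∑ m ∈ Finset.range N,
          ∑ j ∈ Finset.Icc 1 (N - m), (ε * |CL j| + ε * |CL (j + m)| + ε ^ 2) :=
        Finset.sum_le_sum bound
    _ = ε * ((N : ℝ) + 1) * S + ε ^ 2 * ((N : ℝ) * (N + 1) / 2) := total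
    _ = ε * ((T : ℝ) / 2 + 1) * S + ε ^ 2 * ((T : ℝ) ^ 2 + 2 * (T : ℝ)) / 8 := by
        have : (T : ℝ) = 2 * (N : ℝ) := by rw [hTN]; push_cast; ring
        rw [this]; ring
end
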